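/- Let G be the bipartite DAG obtained from a bipartite graph U=(L,R;E) by orienting all edges from L to R, and let f: L∪R → ℝ. If the set of edges (ℓ,r) ∈ E with f(ℓ) > f(r) contains a matching M of size |M| ≥ ε·|L∪R|, then for every function g: L∪R → ℝ that is monotone on G (i.e., g(ℓ) ≤ g(r) for all (ℓ,r) ∈ E), the number of vertices v with f(v) ≠ g(v) is at least ε·|L∪R|. -/

import Mathlib

/-- If the violated edges of `f` on the bipartite DAG (all edges oriented `L → R`)
contain a matching of size at least `ε · |L ∪ R|`, then `f` differs from every
monotone function `g` on at least `ε · |L ∪ R|` vertices. -/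
theorem stmt2 {L R : Type*} [Fintype L] [Fintype R]
    (E : Finset (L × R)) (f : L ⊕ R → ℝ) (ε : ℝ) (M : Finset (L × R))
    (hME : M ⊆ E)
    (hviol : ∀ e ∈ M, f (Sum.inl e.1) > f (Sum.inr e.2))
    (hmatch : ∀ e ∈ M, ∀ e' ∈ M, (e.1 = e'.1 ∨ e.2 = e'.2) → e = e')
    (hsize : ε * (Fintype.card L + Fintype.card R) ≤ (M.card : ℝ))
    (g : L ⊕ R → ℝ)
    (hmono : ∀ e ∈ E, g (Sum.inl e.1) ≤ g (Sum.inr e.2)) :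
    ε * (Fintype.card L + Fintype.card R)
      ≤ ((Finset.univ.filter fun v : L ⊕ R => f v ≠ g v).card : ℝ) := by
  refine hsize.trans ?_
  have key : ∀ e ∈ M, f (Sum.inl e.1) ≠ g (Sum.inl e.1) ∨ f (Sum.inr e.2) ≠ g (Sum.inr e.2) := by
    intro e he
    by_contra h
    push_neg at h
    linarith [hviol e he, hmono e (hME he), h.1, h.2]
  have := Finset.card_le_card_of_injOn
    (f := fun e : L × R => if f (Sum.inl e.1) ≠ g (Sum.inl e.1) then (Sum.inl e.1 : L ⊕ R) else Sum.inr e.2)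
    (s := M) (t := Finset.univ.filter fun v : L ⊕ R => f v ≠ g v)
    (fun e he => by
      simp only [Finset.mem_coe, Finset.mem_filter, Finset.mem_univ, true_and]
      split
      · assumption
      · rcases key e he with h | h
        · tauto
        · exact h)
    (fun e he e' he' hfe => by
      dsimp only at hfe
      split at hfe <;> split at hfe <;>
        ((simp only [Sum.inl.injEq, Sum.inr.injEq, reduceCtorEq] at hfe) <;>
          exact hmatch e he e' he' (by tauto)))
  exact_mod_cast this
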